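/- For the matrix M_1 = [[1,1,1],[0,1,0],[1,1,0]], the (1,1)-entry of M_1^{n-1} equals the Fibonacci-type expression (μ^n - (1-μ)^n)/√5, where μ = (1+√5)/2. Equivalently, (M_1^{n-1})_{11} = F_n, the n-th Fibonacci number. -/

import Mathlib

lemma M1_aux (k : ℕ) :
    ((!![1,1,1;0,1,0;1,1,0] : Matrix (Fin 3) (Fin 3) ℤ) ^ k) 0 0 = Nat.fib (k+1) ∧
    ((!![1,1,1;0,1,0;1,1,0] : Matrix (Fin 3) (Fin 3) ℤ) ^ k) 0 2 = Nat.fib k := by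
  induction k with
  | zero => simp [Matrix.one_apply]
  | succ k ih =>
    rw [pow_succ]
    constructor <;>
      simp [Matrix.mul_apply, Fin.sum_univ_three, ih.1, ih.2, Nat.fib_add_two, Matrix.vecHead, Matrix.vecTail] <;>
      push_cast <;> ring

/-- The `(1,1)` entry of `M₁^(n-1)` is the `n`-th Fibonacci number, equal to
`(μⁿ - (1-μ)ⁿ)/√5` with `μ = (1+√5)/2`. -/
theorem M1_pow_entry_fib (M₁ : Matrix (Fin 3) (Fin 3) ℤ)
    (hM₁ : M₁ = !![1,1,1;0,1,0;1,1,0]) :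
    ∀ n : ℕ, 1 ≤ n →
      (((M₁ ^ (n - 1)) 0 0 : ℤ) : ℝ) =
        (((1 + Real.sqrt 5) / 2) ^ n - (1 - (1 + Real.sqrt 5) / 2) ^ n) /
          Real.sqrt 5 ∧
      (M₁ ^ (n - 1)) 0 0 = Nat.fib n := by
  intro n hn
  subst hM₁
  have h := (M1_aux (n - 1)).1
  rw [Nat.sub_add_cancel hn] at h
  refine ⟨?_, h⟩
  rw [h]
  push_cast
  rw [Real.coe_fib_eq]
  have : Real.goldenRatio = (1 + Real.sqrt 5) / 2 := rfl
  have h2 : Real.goldenConj = 1 - (1 + Real.sqrt 5) / 2 := by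
    rw [Real.goldenConj]; ring
  rw [this, h2]
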